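/- For $n=3$ and nonnegative coefficients $a_{ji}$ ($j=1,2$, $i=1,2,3$) with $a_{11}a_{22}-a_{12}a_{21}\neq 0$ and $a_{1i}^2+a_{2i}^2\neq 0$ for each $i$, the minimum over $x_3\in\mathbb{R}$ of $\Big|\frac{a_{22}x_1-a_{12}x_2+(a_{12}a_{23}-a_{13}a_{22})x_3}{a_{11}a_{22}-a_{12}a_{21}}\Big|+\Big|\frac{-a_{21}x_1+a_{11}x_2+(a_{21}a_{13}-a_{23}a_{11})x_3}{a_{11}a_{22}-a_{12}a_{21}}\Big|+|x_3|$ equals $\min_{i\neq j,\ i,j\in\{1,2,3\}}\frac{|a_{2i}x_1-a_{1i}x_2|+|a_{2j}x_1-a_{1j}x_2|}{|a_{2i}a_{1j}-a_{1i}a_{2j}|}$, where terms with $a_{2i}a_{1j}-a_{1i}a_{2j}=0$ are set to $+\infty$. -/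

import Mathlib

open scoped ENNReal

private lemma abs_le_abs_add_same (u v : ℝ) (h : 0 ≤ u * v) : |u| ≤ |u + v| := by
  cases' mul_nonneg_iff.mp h with h' h'
  · rw [abs_of_nonneg h'.1, abs_of_nonneg (by linarith [h'.1, h'.2] : (0:ℝ) ≤ u + v)]
    linarith [h'.2]
  · rw [abs_of_nonpos h'.1, abs_of_nonpos (by linarith [h'.1, h'.2] : u + v ≤ 0)]
    linarith [h'.2]

private lemma ray_right (p c q d r e t x : ℝ) (ht : t ≤ x)
    (h1 : 0 ≤ (p + c*t)*c) (h2 : 0 ≤ (q + d*t)*d) (h3 : 0 ≤ (r + e*t)*e) :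
    |p + c*t| + |q + d*t| + |r + e*t| ≤ |p + c*x| + |q + d*x| + |r + e*x| := by
  have k1 := abs_le_abs_add_same (p + c*t) (c*(x-t))
    (by nlinarith [mul_nonneg h1 (sub_nonneg.mpr ht)])
  have k2 := abs_le_abs_add_same (q + d*t) (d*(x-t))
    (by nlinarith [mul_nonneg h2 (sub_nonneg.mpr ht)])
  have k3 := abs_le_abs_add_same (r + e*t) (e*(x-t))
    (by nlinarith [mul_nonneg h3 (sub_nonneg.mpr ht)])
  rw [show p + c*t + c*(x-t) = p + c*x by ring] at k1
  rw [show q + d*t + d*(x-t) = q + d*x by ring] at k2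
  rw [show r + e*t + e*(x-t) = r + e*x by ring] at k3
  linarith

private lemma ray_left (p c q d r e t x : ℝ) (ht : x ≤ t)
    (h1 : (p + c*t)*c ≤ 0) (h2 : (q + d*t)*d ≤ 0) (h3 : (r + e*t)*e ≤ 0) :
    |p + c*t| + |q + d*t| + |r + e*t| ≤ |p + c*x| + |q + d*x| + |r + e*x| := by
  have k1 := abs_le_abs_add_same (p + c*t) (c*(x-t))
    (by nlinarith [mul_nonneg (neg_nonneg.mpr h1) (sub_nonneg.mpr ht)])
  have k2 := abs_le_abs_add_same (q + d*t) (d*(x-t))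
    (by nlinarith [mul_nonneg (neg_nonneg.mpr h2) (sub_nonneg.mpr ht)])
  have k3 := abs_le_abs_add_same (r + e*t) (e*(x-t))
    (by nlinarith [mul_nonneg (neg_nonneg.mpr h3) (sub_nonneg.mpr ht)])
  rw [show p + c*t + c*(x-t) = p + c*x by ring] at k1
  rw [show q + d*t + d*(x-t) = q + d*x by ring] at k2
  rw [show r + e*t + e*(x-t) = r + e*x by ring] at k3
  linarith

private lemma abs_affine_interp (u v s t x : ℝ) (hs : s ≤ x) (hx : x ≤ t)
    (h : 0 ≤ (u + v*s)*(u + v*t)) :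
    (t-s) * |u + v*x| = (t-x) * |u + v*s| + (x-s) * |u + v*t| := by
  rcases eq_or_lt_of_le (le_trans hs hx) with hst | hst
  · have hxs : x = s := le_antisymm (hst ▸ hx) hs
    subst hxs; rw [← hst]; ring
  · cases' mul_nonneg_iff.mp h with h' h'
    · have hmid : 0 ≤ u + v*x := by
        nlinarith [mul_nonneg (sub_nonneg.mpr hx) h'.1, mul_nonneg (sub_nonneg.mpr hs) h'.2]
      rw [abs_of_nonneg h'.1, abs_of_nonneg h'.2, abs_of_nonneg hmid]; ring
    · have hmid : u + v*x ≤ 0 := by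
        nlinarith [mul_nonneg (sub_nonneg.mpr hx) (neg_nonneg.mpr h'.1),
          mul_nonneg (sub_nonneg.mpr hs) (neg_nonneg.mpr h'.2)]
      rw [abs_of_nonpos h'.1, abs_of_nonpos h'.2, abs_of_nonpos hmid]; ring

private lemma seg_bound (p c q d r e s t x m : ℝ) (hs : s ≤ x) (hx : x ≤ t)
    (h1 : 0 ≤ (p + c*s)*(p + c*t)) (h2 : 0 ≤ (q + d*s)*(q + d*t))
    (h3 : 0 ≤ (r + e*s)*(r + e*t))
    (hms : m ≤ |p + c*s| + |q + d*s| + |r + e*s|)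
    (hmt : m ≤ |p + c*t| + |q + d*t| + |r + e*t|) :
    m ≤ |p + c*x| + |q + d*x| + |r + e*x| := by
  rcases eq_or_lt_of_le (le_trans hs hx) with hst | hst
  · have hxs : x = s := le_antisymm (hst ▸ hx) hs
    subst hxs; exact hms
  · have i1 := abs_affine_interp p c s t x hs hx h1
    have i2 := abs_affine_interp q d s t x hs hx h2
    have i3 := abs_affine_interp r e s t x hs hx h3
    nlinarith [mul_nonneg (sub_nonneg.mpr hx)
        (sub_nonneg.mpr hms),
      mul_nonneg (sub_nonneg.mpr hs) (sub_nonneg.mpr hmt)]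

private lemma sgn_left (p c u v w : ℝ) (h1 : u ≤ v) (h2 : v ≤ w)
    (h : p + c*u = 0 ∨ p + c*v = 0 ∨ p + c*w = 0 ∨ c = 0) : (p + c*u)*c ≤ 0 := by
  rcases h with h | h | h | h
  · rw [h, zero_mul]
  · have e : (p + c*u)*c = -(c^2*(v-u)) := by linear_combination c * h
    rw [e, neg_nonpos]; exact mul_nonneg (sq_nonneg c) (by linarith)
  · have e : (p + c*u)*c = -(c^2*(w-u)) := by linear_combination c * h
    rw [e, neg_nonpos]; exact mul_nonneg (sq_nonneg c) (by linarith)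
  · rw [h, mul_zero]

private lemma sgn_right (p c u v w : ℝ) (h1 : u ≤ v) (h2 : v ≤ w)
    (h : p + c*u = 0 ∨ p + c*v = 0 ∨ p + c*w = 0 ∨ c = 0) : 0 ≤ (p + c*w)*c := by
  rcases h with h | h | h | h
  · have e : (p + c*w)*c = c^2*(w-u) := by linear_combination c * h
    rw [e]; exact mul_nonneg (sq_nonneg c) (by linarith)
  · have e : (p + c*w)*c = c^2*(w-v) := by linear_combination c * h
    rw [e]; exact mul_nonneg (sq_nonneg c) (by linarith)
  · rw [h, zero_mul]
  · rw [h, mul_zero]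

private lemma sgn_seg_lo (p c u v w : ℝ) (h1 : u ≤ v) (h2 : v ≤ w)
    (h : p + c*u = 0 ∨ p + c*v = 0 ∨ p + c*w = 0 ∨ c = 0) :
    0 ≤ (p + c*u)*(p + c*v) := by
  rcases h with h | h | h | h
  · rw [h, zero_mul]
  · rw [h, mul_zero]
  · have e : (p + c*u)*(p + c*v) = c^2*((w-u)*(w-v)) := by
      linear_combination (p + c*u + c*v - c*w) * h
    rw [e]; exact mul_nonneg (sq_nonneg c) (mul_nonneg (by linarith) (by linarith))
  · subst h; nlinarith [sq_nonneg p]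

private lemma sgn_seg_hi (p c u v w : ℝ) (h1 : u ≤ v) (h2 : v ≤ w)
    (h : p + c*u = 0 ∨ p + c*v = 0 ∨ p + c*w = 0 ∨ c = 0) :
    0 ≤ (p + c*v)*(p + c*w) := by
  rcases h with h | h | h | h
  · have e : (p + c*v)*(p + c*w) = c^2*((v-u)*(w-u)) := by
      linear_combination (p + c*v + c*w - c*u) * h
    rw [e]; exact mul_nonneg (sq_nonneg c) (mul_nonneg (by linarith) (by linarith))
  · rw [h, zero_mul]
  · rw [h, mul_zero]
  · subst h; nlinarith [sq_nonneg p]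

private lemma sorted3 (p c q d r e u v w x m : ℝ) (huv : u ≤ v) (hvw : v ≤ w)
    (hc : p + c*u = 0 ∨ p + c*v = 0 ∨ p + c*w = 0 ∨ c = 0)
    (hd : q + d*u = 0 ∨ q + d*v = 0 ∨ q + d*w = 0 ∨ d = 0)
    (he : r + e*u = 0 ∨ r + e*v = 0 ∨ r + e*w = 0 ∨ e = 0)
    (hmu : m ≤ |p + c*u| + |q + d*u| + |r + e*u|)
    (hmv : m ≤ |p + c*v| + |q + d*v| + |r + e*v|)
    (hmw : m ≤ |p + c*w| + |q + d*w| + |r + e*w|) :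
    m ≤ |p + c*x| + |q + d*x| + |r + e*x| := by
  rcases le_total x v with hxv | hxv
  · rcases le_total x u with hxu | hxu
    · exact le_trans hmu (ray_left p c q d r e u x hxu
        (sgn_left p c u v w huv hvw hc) (sgn_left q d u v w huv hvw hd)
        (sgn_left r e u v w huv hvw he))
    · exact seg_bound p c q d r e u v x m hxu hxv
        (sgn_seg_lo p c u v w huv hvw hc) (sgn_seg_lo q d u v w huv hvw hd)
        (sgn_seg_lo r e u v w huv hvw he) hmu hmv
  · rcases le_total x w with hxw | hxw
    · exact seg_bound p c q d r e v w x m hxv hxw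
        (sgn_seg_hi p c u v w huv hvw hc) (sgn_seg_hi q d u v w huv hvw hd)
        (sgn_seg_hi r e u v w huv hvw he) hmv hmw
    · exact le_trans hmw (ray_right p c q d r e w x hxw
        (sgn_right p c u v w huv hvw hc) (sgn_right q d u v w huv hvw hd)
        (sgn_right r e u v w huv hvw he))

private lemma key3 (p c q d k1 k2 x m : ℝ)
    (h1 : p + c*k1 = 0 ∨ c = 0) (h2 : q + d*k2 = 0 ∨ d = 0)
    (hm0 : m ≤ |p| + |q|)
    (hm1 : m ≤ |p + c*k1| + |q + d*k1| + |k1|)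
    (hm2 : m ≤ |p + c*k2| + |q + d*k2| + |k2|) :
    m ≤ |p + c*x| + |q + d*x| + |x| := by
  have hm0' : m ≤ |p + c*0| + |q + d*0| + |0 + 1*0| := by simpa using hm0
  have hm1' : m ≤ |p + c*k1| + |q + d*k1| + |0 + 1*k1| := by simpa using hm1
  have hm2' : m ≤ |p + c*k2| + |q + d*k2| + |0 + 1*k2| := by simpa using hm2
  rcases le_total k1 k2 with h12 | h12 <;>
    rcases le_total k1 0 with h10 | h10 <;> rcases le_total k2 0 with h20 | h20
  · simpa using sorted3 p c q d 0 1 k1 k2 0 x m h12 h20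
      (by tauto) (by tauto) (by norm_num) hm1' hm2' hm0'
  · simpa using sorted3 p c q d 0 1 k1 0 k2 x m h10 h20
      (by tauto) (by tauto) (by norm_num) hm1' hm0' hm2'
  · -- k1 ≤ k2, 0 ≤ k1, k2 ≤ 0 : degenerate, use k1 ≤ k2 ≤ 0
    simpa using sorted3 p c q d 0 1 k1 k2 0 x m h12 h20
      (by tauto) (by tauto) (by norm_num) hm1' hm2' hm0'
  · simpa using sorted3 p c q d 0 1 0 k1 k2 x m h10 h12
      (by tauto) (by tauto) (by norm_num) hm0' hm1' hm2'
  · simpa using sorted3 p c q d 0 1 k2 k1 0 x m h12 h10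
      (by tauto) (by tauto) (by norm_num) hm2' hm1' hm0'
  · -- k2 ≤ k1, k1 ≤ 0, 0 ≤ k2 : degenerate
    simpa using sorted3 p c q d 0 1 k2 k1 0 x m h12 h10
      (by tauto) (by tauto) (by norm_num) hm2' hm1' hm0'
  · simpa using sorted3 p c q d 0 1 k2 0 k1 x m h20 h10
      (by tauto) (by tauto) (by norm_num) hm2' hm0' hm1'
  · simpa using sorted3 p c q d 0 1 0 k2 k1 x m h20 h12
      (by tauto) (by tauto) (by norm_num) hm0' hm2' hm1'

private theorem main' (P Q R c d D : ℝ) (hD : D ≠ 0) (hid : Q*c - P*d = D*R) :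
    (⨅ x : ℝ, ENNReal.ofReal (|(P + c*x)/D| + |(Q + d*x)/D| + |x|))
    = min (min (ENNReal.ofReal ((|Q| + |P|)/|D|))
          (if d = 0 then (⊤:ℝ≥0∞) else ENNReal.ofReal ((|Q| + |R|)/|d|)))
          (if c = 0 then (⊤:ℝ≥0∞) else ENNReal.ofReal ((|P| + |R|)/|c|)) := by
  have habsD : (0:ℝ) < |D| := abs_pos.mpr hD
  -- value computations
  have h0val : |(P + c*0)/D| + |(Q + d*0)/D| + |(0:ℝ)| = (|Q| + |P|)/|D| := by
    rw [mul_zero, mul_zero, add_zero, add_zero, abs_zero, abs_div, abs_div]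
    field_simp; ring
  have hcval : c ≠ 0 → |(P + c*((-P)/c))/D| + |(Q + d*((-P)/c))/D| + |(-P)/c|
      = (|P| + |R|)/|c| := by
    intro hc
    have e1 : (P + c*((-P)/c))/D = 0 := by field_simp; ring
    have e2 : (Q + d*((-P)/c))/D = R/c := by
      field_simp; linear_combination hid
    rw [e1, e2, abs_zero, abs_div, abs_div, abs_neg]
    field_simp; ring
  have hdval : d ≠ 0 → |(P + c*((-Q)/d))/D| + |(Q + d*((-Q)/d))/D| + |(-Q)/d|
      = (|Q| + |R|)/|d| := by
    intro hd
    have e1 : (Q + d*((-Q)/d))/D = 0 := by field_simp; ring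
    have e2 : (P + c*((-Q)/d))/D = (-R)/d := by
      field_simp; linear_combination -hid
    rw [e1, e2, abs_zero, abs_div, abs_div, abs_neg, abs_neg]
    field_simp; ring
  set E0 : ℝ := (|Q| + |P|)/|D| with hE0
  set T2r : ℝ := if d = 0 then E0 else (|Q| + |R|)/|d| with hT2r
  set T1r : ℝ := if c = 0 then E0 else (|P| + |R|)/|c| with hT1r
  -- pointwise lower bound
  have hpt : ∀ x : ℝ, min (min E0 T2r) T1r
      ≤ |(P + c*x)/D| + |(Q + d*x)/D| + |x| := by
    intro x
    have e1 : (P + c*x)/D = P/D + c/D*x := by ring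
    have e2 : (Q + d*x)/D = Q/D + d/D*x := by ring
    rw [e1, e2]
    have hm0 : min (min E0 T2r) T1r ≤ |P/D| + |Q/D| := by
      have : E0 = |P/D| + |Q/D| := by rw [hE0, abs_div, abs_div]; field_simp; ring
      calc min (min E0 T2r) T1r ≤ E0 := le_trans (min_le_left _ _) (min_le_left _ _)
        _ = _ := this
    by_cases hc : c = 0 <;> by_cases hd : d = 0
    · refine key3 (P/D) (c/D) (Q/D) (d/D) 0 0 x _ (Or.inr (by simp [hc]))
        (Or.inr (by simp [hd])) hm0 (by simpa using hm0) (by simpa using hm0)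
    · refine key3 (P/D) (c/D) (Q/D) (d/D) 0 ((-Q)/d) x _ (Or.inr (by simp [hc]))
        (Or.inl (by field_simp; ring)) hm0 (by simpa using hm0) ?_
      have hv := hdval hd
      rw [show (P + c*((-Q)/d))/D = P/D + c/D*((-Q)/d) by ring,
        show (Q + d*((-Q)/d))/D = Q/D + d/D*((-Q)/d) by ring] at hv
      rw [hv]
      calc min (min E0 T2r) T1r ≤ T2r := le_trans (min_le_left _ _) (min_le_right _ _)
        _ = _ := by rw [hT2r, if_neg hd]
    · refine key3 (P/D) (c/D) (Q/D) (d/D) ((-P)/c) 0 x _ (Or.inl (by field_simp; ring))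
        (Or.inr (by simp [hd])) hm0 ?_ (by simpa using hm0)
      have hv := hcval hc
      rw [show (P + c*((-P)/c))/D = P/D + c/D*((-P)/c) by ring,
        show (Q + d*((-P)/c))/D = Q/D + d/D*((-P)/c) by ring] at hv
      rw [hv]
      calc min (min E0 T2r) T1r ≤ T1r := min_le_right _ _
        _ = _ := by rw [hT1r, if_neg hc]
    · refine key3 (P/D) (c/D) (Q/D) (d/D) ((-P)/c) ((-Q)/d) x _
        (Or.inl (by field_simp; ring)) (Or.inl (by field_simp; ring)) hm0 ?_ ?_
      · have hv := hcval hc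
        rw [show (P + c*((-P)/c))/D = P/D + c/D*((-P)/c) by ring,
          show (Q + d*((-P)/c))/D = Q/D + d/D*((-P)/c) by ring] at hv
        rw [hv]
        calc min (min E0 T2r) T1r ≤ T1r := min_le_right _ _
          _ = _ := by rw [hT1r, if_neg hc]
      · have hv := hdval hd
        rw [show (P + c*((-Q)/d))/D = P/D + c/D*((-Q)/d) by ring,
          show (Q + d*((-Q)/d))/D = Q/D + d/D*((-Q)/d) by ring] at hv
        rw [hv]
        calc min (min E0 T2r) T1r ≤ T2r := le_trans (min_le_left _ _) (min_le_right _ _)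
          _ = _ := by rw [hT2r, if_neg hd]
  apply le_antisymm
  · -- iInf ≤ RHS
    refine le_min (le_min ?_ ?_) ?_
    · exact iInf_le_of_le 0 (le_of_eq (by rw [h0val]))
    · by_cases hd : d = 0
      · simp [hd]
      · rw [if_neg hd]
        exact iInf_le_of_le ((-Q)/d) (le_of_eq (by rw [hdval hd]))
    · by_cases hc : c = 0
      · simp [hc]
      · rw [if_neg hc]
        exact iInf_le_of_le ((-P)/c) (le_of_eq (by rw [hcval hc]))
  · -- RHS ≤ iInf
    refine le_iInf fun x => le_trans ?_ (ENNReal.ofReal_le_ofReal (hpt x))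
    rcases min_cases (min E0 T2r) T1r with ⟨heq, -⟩ | ⟨heq, -⟩
    · rw [heq]
      rcases min_cases E0 T2r with ⟨h2, -⟩ | ⟨h2, -⟩
      · rw [h2]
        exact le_trans (min_le_left _ _) (min_le_left _ _)
      · rw [h2, hT2r]
        by_cases hd : d = 0
        · simp only [if_pos hd]
          exact le_trans (min_le_left _ _) (min_le_left _ _)
        · simp only [if_neg hd]
          exact le_trans (min_le_left _ _) (min_le_right _ _)
    · rw [heq, hT1r]
      by_cases hc : c = 0
      · simp only [if_pos hc]
        exact le_trans (min_le_left _ _) (min_le_left _ _)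
      · simp only [if_neg hc]
        exact min_le_right _ _

theorem min_over_x3_piecewise_linear
    (a11 a12 a13 a21 a22 a23 x1 x2 : ℝ)
    (h11 : 0 ≤ a11) (h12 : 0 ≤ a12) (h13 : 0 ≤ a13)
    (h21 : 0 ≤ a21) (h22 : 0 ≤ a22) (h23 : 0 ≤ a23)
    (hdet : a11 * a22 - a12 * a21 ≠ 0)
    (hnz1 : a11 ^ 2 + a21 ^ 2 ≠ 0) (hnz2 : a12 ^ 2 + a22 ^ 2 ≠ 0)
    (hnz3 : a13 ^ 2 + a23 ^ 2 ≠ 0) :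
    (⨅ x3 : ℝ, ENNReal.ofReal
        (|(a22 * x1 - a12 * x2 + (a12 * a23 - a13 * a22) * x3) / (a11 * a22 - a12 * a21)| +
         |(-(a21 * x1) + a11 * x2 + (a21 * a13 - a23 * a11) * x3) / (a11 * a22 - a12 * a21)| +
         |x3|))
      = min (min
          (if a21 * a12 - a11 * a22 = 0 then ⊤ else
            ENNReal.ofReal ((|a21 * x1 - a11 * x2| + |a22 * x1 - a12 * x2|) /
              |a21 * a12 - a11 * a22|))
          (if a21 * a13 - a11 * a23 = 0 then ⊤ else
            ENNReal.ofReal ((|a21 * x1 - a11 * x2| + |a23 * x1 - a13 * x2|) /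
              |a21 * a13 - a11 * a23|)))
          (if a22 * a13 - a12 * a23 = 0 then ⊤ else
            ENNReal.ofReal ((|a22 * x1 - a12 * x2| + |a23 * x1 - a13 * x2|) /
              |a22 * a13 - a12 * a23|)) := by
  have h := main' (a22 * x1 - a12 * x2) (-(a21 * x1) + a11 * x2) (a23 * x1 - a13 * x2)
    (a12 * a23 - a13 * a22) (a21 * a13 - a23 * a11) (a11 * a22 - a12 * a21) hdet (by ring)
  rw [h]
  -- massage RHS
  have eQ : |a21 * x1 - a11 * x2| = |-(a21 * x1) + a11 * x2| := by
    rw [show a21 * x1 - a11 * x2 = -(-(a21 * x1) + a11 * x2) by ring, abs_neg]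
  have e12c : a21 * a12 - a11 * a22 = -(a11 * a22 - a12 * a21) := by ring
  have e13c : a21 * a13 - a11 * a23 = a21 * a13 - a23 * a11 := by ring
  have e23c : a22 * a13 - a12 * a23 = -(a12 * a23 - a13 * a22) := by ring
  rw [e12c, e13c, e23c]
  simp only [neg_eq_zero, abs_neg, eQ, if_neg hdet]
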